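/- Let b be a regular symmetric or alternate bilinear form on a finite-dimensional vector space V over a field K, and u ∈ GL(V) a b-isometry. If P, Q are monic polynomials with nonzero constant terms such that P^# and Q are coprime, then Ker P(u) and Ker Q(u) are b-orthogonal to each other. -/

import Mathlib

open Polynomial

/-- The reciprocal polynomial `P^#`. -/
noncomputable def recip {K : Type*} [Field K] (P : K[X]) : K[X] :=
  Polynomial.C (P.coeff 0)⁻¹ * P.reverse

theorem ker_orthogonal_ker {K V : Type*} [Field K] [AddCommGroup V] [Module K V]
    [FiniteDimensional K V]
    (B : V →ₗ[K] V →ₗ[K] K)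
    (hreg : B.Nondegenerate)
    (hsa : (∀ x y, B x y = B y x) ∨ (∀ x, B x x = 0))
    (u : V ≃ₗ[K] V)
    (hiso : ∀ x y, B (u x) (u y) = B x y)
    (P Q : K[X]) (hPm : P.Monic) (hQm : Q.Monic)
    (hP0 : P.coeff 0 ≠ 0) (hQ0 : Q.coeff 0 ≠ 0)
    (hcop : IsCoprime (recip P) Q) :
    ∀ x ∈ LinearMap.ker (Polynomial.aeval (u : Module.End K V) P),
      ∀ y ∈ LinearMap.ker (Polynomial.aeval (u : Module.End K V) Q),
        B x y = 0 := by
  set U : Module.End K V := (u : Module.End K V) with hU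
  set U' : Module.End K V := (u.symm : Module.End K V) with hU'
  have hUU' : U * U' = 1 := by ext v; simp [hU, hU']
  have hU'U : U' * U = 1 := by ext v; simp [hU, hU']
  have hcommUU' : Commute U' U := by
    unfold Commute SemiconjBy; rw [hU'U, hUU']
  -- U' commutes with any polynomial in U
  have hcommP : ∀ f : K[X], Commute U' (aeval U f) := by
    intro f
    induction f using Polynomial.induction_on' with
    | add p q hp hq =>
      rw [map_add]; exact hp.add_right hq
    | monomial m c =>
      rw [aeval_monomial]
      have h1 : Commute U' ((algebraMap K (Module.End K V)) c) :=
        (Algebra.commutes c U').symm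
      exact h1.mul_right (hcommUU'.pow_right m)
  intro x hx y hy
  simp only [LinearMap.mem_ker] at hx hy
  have hiso' : ∀ x y, B x (u y) = B (u.symm x) y := by
    intro a b
    have := hiso (u.symm a) b
    simpa using this
  have hpow : ∀ (n : ℕ) (a b : V), B a ((U ^ n) b) = B ((U' ^ n) a) b := by
    intro n
    induction n with
    | zero => intro a b; simp
    | succ n ih =>
      intro a b
      have h1 : (U ^ (n + 1)) b = (U ^ n) (U b) := by rw [pow_succ]; rfl
      have h2 : (U' ^ (n + 1)) a = (U' ^ n) (U' a) := by rw [pow_succ]; rfl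
      rw [h1, h2, ih a (U b)]
      have hcm : u.symm ((U' ^ n) a) = (U' ^ n) (U' a) := by
        have hc : U' * U' ^ n = U' ^ n * U' := ((Commute.refl U').pow_right n).eq
        calc u.symm ((U' ^ n) a) = (U' * U' ^ n) a := rfl
          _ = (U' ^ n * U') a := by rw [hc]
          _ = (U' ^ n) (U' a) := rfl
      have := hiso' ((U' ^ n) a) b
      rw [hcm] at this
      exact this
  have hadj : ∀ (f : K[X]) (a b : V),
      B a ((aeval U f) b) = B ((aeval U' f) a) b := by
    intro f
    induction f using Polynomial.induction_on' with
    | add p q hp hq =>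
      intro a b
      simp only [map_add, LinearMap.add_apply, map_add]
      rw [hp, hq]
    | monomial m c =>
      intro a b
      simp only [aeval_monomial]
      have halg : (algebraMap K (Module.End K V)) c = c • (1 : Module.End K V) := by
        simp [Algebra.algebraMap_eq_smul_one]
      rw [halg]
      simp only [smul_mul_assoc, one_mul, LinearMap.smul_apply, map_smul, smul_eq_mul]
      rw [hpow m a b]
  -- key: aeval U' (reverse P) ∘ U^n = aeval U P
  set n := P.natDegree with hn
  have hkey : (aeval U' P.reverse) * U ^ n = aeval U P := by
    have hdeg : P.reverse.natDegree < n + 1 :=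
      lt_of_le_of_lt (Polynomial.reverse_natDegree_le P) (Nat.lt_succ_self n)
    have hdeg' : P.natDegree < n + 1 := Nat.lt_succ_self n
    rw [Polynomial.aeval_eq_sum_range' hdeg, Polynomial.aeval_eq_sum_range' hdeg']
    rw [Finset.sum_mul]
    have hterm : ∀ i ∈ Finset.range (n + 1),
        P.reverse.coeff i • U' ^ i * U ^ n = P.coeff (n - i) • U ^ (n - i) := by
      intro i hi
      have hile : i ≤ n := Nat.lt_succ_iff.mp (Finset.mem_range.mp hi)
      have hc : P.reverse.coeff i = P.coeff (n - i) := by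
        rw [Polynomial.coeff_reverse]
        congr 1
        rw [Polynomial.revAt_le hile]
      have hmul : U' ^ i * U ^ n = U ^ (n - i) := by
        have h1 : U ^ n = U ^ i * U ^ (n - i) := by
          rw [← pow_add, Nat.add_sub_cancel' hile]
        rw [h1, ← mul_assoc]
        have h2 : U' ^ i * U ^ i = 1 := by
          rw [← hcommUU'.mul_pow, hU'U, one_pow]
        rw [h2, one_mul]
      rw [hc, smul_mul_assoc, hmul]
    rw [Finset.sum_congr rfl hterm]
    have := Finset.sum_range_reflect (fun j => P.coeff j • U ^ j) (n + 1)
    simpa using this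
  have hrev : (aeval U' (P.reverse)) x = 0 := by
    have hxeq : x = (U ^ n) ((U' ^ n) x) := by
      have h1 : (U ^ n) * (U' ^ n) = 1 := by
        rw [← hcommUU'.symm.mul_pow, hUU', one_pow]
      calc x = ((U ^ n) * (U' ^ n)) x := by rw [h1]; rfl
        _ = (U ^ n) ((U' ^ n) x) := rfl
    have hcomm : (aeval U P) * U' ^ n = U' ^ n * (aeval U P) := by
      exact ((hcommP P).pow_left n).symm.eq
    calc (aeval U' P.reverse) x
        = (aeval U' P.reverse) ((U ^ n) ((U' ^ n) x)) := by rw [← hxeq]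
      _ = ((aeval U' P.reverse) * U ^ n) ((U' ^ n) x) := rfl
      _ = (aeval U P) ((U' ^ n) x) := by rw [hkey]
      _ = ((aeval U P) * U' ^ n) x := rfl
      _ = (U' ^ n * (aeval U P)) x := by rw [hcomm]
      _ = (U' ^ n) ((aeval U P) x) := rfl
      _ = 0 := by rw [hx]; simp
  have hrecip : (aeval U' (recip P)) x = 0 := by
    simp only [recip, map_mul, aeval_C]
    simp [Module.End.mul_apply, hrev]
  obtain ⟨a, b, hab⟩ := hcop
  have hy1 : (aeval U (a * recip P)) y = y := by
    have h := congrArg (fun f => (aeval U f) y) hab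
    simp only [map_add, map_mul, LinearMap.add_apply, map_one,
      Module.End.one_apply] at h
    have hbq : ((aeval U) b * (aeval U) Q) y = 0 := by
      have : ((aeval U) b * (aeval U) Q) y = (aeval U b) ((aeval U Q) y) := rfl
      rw [this, hy]; simp
    rw [hbq, add_zero] at h
    simpa [map_mul] using h
  calc B x y = B x ((aeval U (a * recip P)) y) := by rw [hy1]
    _ = B ((aeval U' (a * recip P)) x) y := hadj _ _ _
    _ = 0 := by
        have h : (aeval U' (a * recip P)) x = (aeval U' a) ((aeval U' (recip P)) x) := by
          simp [map_mul, Module.End.mul_apply]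
        rw [h, hrecip]
        simp [LinearMap.map_zero₂]
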